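/- arXiv:1008.0110 — 2 statements merged into one kernel-verified Lean document; each statement's English description precedes it below -/
import Mathlib

section
/- Let ABC be a triangle, K an interior point with isogonal conjugate K₁, DEF the pedal triangle of K₁ with respect to ABC, and TUV the antipedal triangle of K with respect to ABC. Then area(DEF) · area(TUV) = (area ABC)². -/
open EuclideanGeometry Real

noncomputable def triArea (X Y Z : EuclideanSpace ℝ (Fin 2)) : ℝ :=
  |(Y 0 - X 0) * (Z 1 - X 1) - (Y 1 - X 1) * (Z 0 - X 0)| / 2

/-- `F` is the foot of the perpendicular from `P` to the line through `X` and `Y`. -/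
def IsFoot (P F X Y : EuclideanSpace ℝ (Fin 2)) : Prop :=
  F ∈ affineSpan ℝ ({X, Y} : Set (EuclideanSpace ℝ (Fin 2))) ∧
    inner ℝ (P - F) (Y - X) = (0 : ℝ)

/-- `K₁` is the isogonal conjugate of `K` with respect to triangle `ABC`. -/
def IsIsogonalConj (A B C K K₁ : EuclideanSpace ℝ (Fin 2)) : Prop :=
  ∠ K₁ A B = ∠ K A C ∧ ∠ K₁ B C = ∠ K B A ∧ ∠ K₁ C A = ∠ K C B

local notation "E2" => EuclideanSpace ℝ (Fin 2)



lemma inner2 (x y : E2) : (inner ℝ x y : ℝ) = x 0 * y 0 + x 1 * y 1 := by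
  simp [PiLp.inner_apply, Fin.sum_univ_two, RCLike.inner_apply, mul_comm]

lemma sub_apply2 (x y : E2) (i : Fin 2) : (x - y) i = x i - y i := rfl

lemma normsq2 (x : E2) : ‖x‖^2 = (x 0)^2 + (x 1)^2 := by
  rw [← real_inner_self_eq_norm_sq, inner2] ; ring

lemma param_of_mem {P X Y : E2} (h : P ∈ affineSpan ℝ ({X, Y} : Set E2)) :
    ∃ r : ℝ, (P 0 = X 0 + r * (Y 0 - X 0)) ∧ (P 1 = X 1 + r * (Y 1 - X 1)) := by
  have h' : (P -ᵥ X) +ᵥ X ∈ affineSpan ℝ ({X, Y} : Set E2) := by rwa [vsub_vadd]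
  obtain ⟨r, hr⟩ := vadd_left_mem_affineSpan_pair.mp h'
  refine ⟨r, ?_, ?_⟩
  · have := congrArg (fun z : E2 => z 0) hr
    simp only [vsub_eq_sub, PiLp.smul_apply, smul_eq_mul] at this
    have h0 : r * (Y 0 - X 0) = P 0 - X 0 := by
      simpa [sub_apply2] using this
    linarith
  · have := congrArg (fun z : E2 => z 1) hr
    simp only [vsub_eq_sub, PiLp.smul_apply, smul_eq_mul] at this
    have h1 : r * (Y 1 - X 1) = P 1 - X 1 := by
      simpa [sub_apply2] using this
    linarith



lemma cross_ne_of_affineIndependent {A B C : E2} (h : AffineIndependent ℝ ![A, B, C]) :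
    (B 0 - A 0) * (C 1 - A 1) - (B 1 - A 1) * (C 0 - A 0) ≠ 0 := by
  intro hz
  apply affineIndependent_iff_not_collinear_set.mp h
  rw [collinear_iff_of_mem (Set.mem_insert A {B, C})]
  rcases eq_or_ne B A with hBA | hBA
  · refine ⟨C - A, ?_⟩
    intro p hp
    rcases hp with rfl | rfl | hp
    · exact ⟨0, by simp⟩
    · exact ⟨0, by simp [hBA]⟩
    · rw [Set.mem_singleton_iff] at hp
      exact ⟨1, by rw [hp]; simp⟩
  · refine ⟨B - A, ?_⟩
    have hne : (B 0 - A 0)^2 + (B 1 - A 1)^2 ≠ 0 := by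
      intro h0
      apply hBA
      have h00 : B 0 - A 0 = 0 := by nlinarith [sq_nonneg (B 0 - A 0), sq_nonneg (B 1 - A 1)]
      have h11 : B 1 - A 1 = 0 := by nlinarith [sq_nonneg (B 0 - A 0), sq_nonneg (B 1 - A 1)]
      ext i
      fin_cases i
      · simpa using sub_eq_zero.mp h00
      · simpa using sub_eq_zero.mp h11
    intro p hp
    rcases hp with rfl | rfl | hp
    · exact ⟨0, by simp⟩
    · exact ⟨1, by simp⟩
    · rw [Set.mem_singleton_iff] at hp
      refine ⟨((C 0 - A 0) * (B 0 - A 0) + (C 1 - A 1) * (B 1 - A 1)) /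
        ((B 0 - A 0)^2 + (B 1 - A 1)^2), ?_⟩
      rw [hp]
      ext i
      fin_cases i
      · show C 0 = (((C 0 - A 0) * (B 0 - A 0) + (C 1 - A 1) * (B 1 - A 1)) /
          ((B 0 - A 0)^2 + (B 1 - A 1)^2)) * (B 0 - A 0) + A 0
        have key : ((C 0 - A 0) * (B 0 - A 0) + (C 1 - A 1) * (B 1 - A 1)) * (B 0 - A 0)
            = (C 0 - A 0) * ((B 0 - A 0)^2 + (B 1 - A 1)^2) := by
          linear_combination (B 1 - A 1) * hz
        rw [div_mul_eq_mul_div, key, mul_div_assoc, div_self hne]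
        ring
      · show C 1 = (((C 0 - A 0) * (B 0 - A 0) + (C 1 - A 1) * (B 1 - A 1)) /
          ((B 0 - A 0)^2 + (B 1 - A 1)^2)) * (B 1 - A 1) + A 1
        have key : ((C 0 - A 0) * (B 0 - A 0) + (C 1 - A 1) * (B 1 - A 1)) * (B 1 - A 1)
            = (C 1 - A 1) * ((B 0 - A 0)^2 + (B 1 - A 1)^2) := by
          linear_combination (-(B 0 - A 0)) * hz
        rw [div_mul_eq_mul_div, key, mul_div_assoc, div_self hne]
        ring


set_option maxHeartbeats 1000000 in
lemma interior_sign (P Q R K : E2)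
    (hK : K ∈ interior (convexHull ℝ ({P, Q, R} : Set E2)))
    (hs : (Q 0 - P 0) * (R 1 - P 1) - (Q 1 - P 1) * (R 0 - P 0) ≠ 0) :
    0 < ((K 0 - P 0) * (R 1 - P 1) - (K 1 - P 1) * (R 0 - P 0)) *
        ((Q 0 - P 0) * (R 1 - P 1) - (Q 1 - P 1) * (R 0 - P 0)) := by
  have hconv : Convex ℝ {x : E2 | 0 ≤ ((x 0 - P 0) * (R 1 - P 1) - (x 1 - P 1) * (R 0 - P 0)) *
      ((Q 0 - P 0) * (R 1 - P 1) - (Q 1 - P 1) * (R 0 - P 0))} := by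
    intro x hx y hy α β hα hβ hαβ
    simp only [Set.mem_setOf_eq] at hx hy ⊢
    have happ0 : (α • x + β • y) 0 = α * x 0 + β * y 0 := rfl
    have happ1 : (α • x + β • y) 1 = α * x 1 + β * y 1 := rfl
    rw [happ0, happ1]
    have hkey : ((α * x 0 + β * y 0 - P 0) * (R 1 - P 1) - (α * x 1 + β * y 1 - P 1) * (R 0 - P 0)) *
        ((Q 0 - P 0) * (R 1 - P 1) - (Q 1 - P 1) * (R 0 - P 0))
        = α * (((x 0 - P 0) * (R 1 - P 1) - (x 1 - P 1) * (R 0 - P 0)) *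
            ((Q 0 - P 0) * (R 1 - P 1) - (Q 1 - P 1) * (R 0 - P 0)))
          + β * (((y 0 - P 0) * (R 1 - P 1) - (y 1 - P 1) * (R 0 - P 0)) *
            ((Q 0 - P 0) * (R 1 - P 1) - (Q 1 - P 1) * (R 0 - P 0))) := by
      linear_combination ((P 0 * (R 1 - P 1) - P 1 * (R 0 - P 0)) *
        ((Q 0 - P 0) * (R 1 - P 1) - (Q 1 - P 1) * (R 0 - P 0))) * hαβ
    rw [hkey]
    have h1 := mul_nonneg hα hx
    have h2 := mul_nonneg hβ hy
    linarith
  have hsub : ({P, Q, R} : Set E2) ⊆ {x : E2 | 0 ≤ ((x 0 - P 0) * (R 1 - P 1) - (x 1 - P 1) * (R 0 - P 0)) *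
      ((Q 0 - P 0) * (R 1 - P 1) - (Q 1 - P 1) * (R 0 - P 0))} := by
    intro z hz
    rcases hz with h | h | h
    · subst h; simp only [Set.mem_setOf_eq]; nlinarith []
    · simp only [Set.mem_setOf_eq, h]
      nlinarith [sq_nonneg ((Q 0 - P 0) * (R 1 - P 1) - (Q 1 - P 1) * (R 0 - P 0))]
    · rw [Set.mem_singleton_iff] at h
      subst h; simp only [Set.mem_setOf_eq]; nlinarith []
  have hhull := convexHull_min hsub hconv
  have hKH : 0 ≤ ((K 0 - P 0) * (R 1 - P 1) - (K 1 - P 1) * (R 0 - P 0)) *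
      ((Q 0 - P 0) * (R 1 - P 1) - (Q 1 - P 1) * (R 0 - P 0)) := hhull (interior_subset hK)
  rcases lt_or_eq_of_le hKH with h | h
  · exact h
  exfalso
  have hgK : (K 0 - P 0) * (R 1 - P 1) - (K 1 - P 1) * (R 0 - P 0) = 0 := by
    rcases mul_eq_zero.mp h.symm with h' | h'
    · exact h'
    · exact absurd h' hs
  obtain ⟨ε, hε, hball⟩ := Metric.isOpen_iff.mp isOpen_interior K hK
  obtain ⟨gQ, hgQ⟩ : ∃ gQ : ℝ, gQ = (Q 0 - P 0) * (R 1 - P 1) - (Q 1 - P 1) * (R 0 - P 0) := ⟨_, rfl⟩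
  obtain ⟨a, ha⟩ : ∃ a : ℝ, a = gQ * (R 1 - P 1) := ⟨_, rfl⟩
  obtain ⟨b, hb⟩ : ∃ b : ℝ, b = gQ * (-(R 0 - P 0)) := ⟨_, rfl⟩
  obtain ⟨t, ht⟩ : ∃ t : ℝ, t = ε / (1 + a^2 + b^2) := ⟨_, rfl⟩
  have hab : 0 < 1 + a^2 + b^2 := by positivity
  have htpos : 0 < t := by rw [ht]; positivity
  obtain ⟨x, hxdef⟩ : ∃ x : E2, x = K - (t * a) • EuclideanSpace.single (0 : Fin 2) (1:ℝ)
      - (t * b) • EuclideanSpace.single (1 : Fin 2) (1:ℝ) := ⟨_, rfl⟩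
  have hx0 : x 0 = K 0 - t * a := by
    simp [hxdef, sub_eq_add_neg, EuclideanSpace.single_apply]
  have hx1 : x 1 = K 1 - t * b := by
    simp [hxdef, sub_eq_add_neg, EuclideanSpace.single_apply]
  have hdist : dist x K < ε := by
    rw [EuclideanSpace.dist_eq, Fin.sum_univ_two, hx0, hx1, Real.dist_eq, Real.dist_eq,
      sq_abs, sq_abs]
    have he : (K 0 - t * a - K 0)^2 + (K 1 - t * b - K 1)^2 = (t * Real.sqrt (a^2+b^2))^2 := by
      rw [mul_pow, Real.sq_sqrt (by positivity)]; ring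
    rw [he, Real.sqrt_sq (by positivity)]
    have h1 : Real.sqrt (a^2+b^2) < 1 + a^2 + b^2 := by
      nlinarith [Real.sq_sqrt (show (0:ℝ) ≤ a^2+b^2 by positivity),
        Real.sqrt_nonneg (a^2+b^2)]
    calc t * Real.sqrt (a^2+b^2) < t * (1 + a^2 + b^2) :=
          (mul_lt_mul_iff_right₀ htpos).mpr h1
      _ = ε := by rw [ht]; field_simp
  have hxmem : 0 ≤ ((x 0 - P 0) * (R 1 - P 1) - (x 1 - P 1) * (R 0 - P 0)) *
      ((Q 0 - P 0) * (R 1 - P 1) - (Q 1 - P 1) * (R 0 - P 0)) :=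
    hhull (interior_subset (hball (by simpa [Metric.mem_ball] using hdist)))
  rw [hx0, hx1, ← hgQ] at hxmem
  have hgx : ((K 0 - t*a - P 0) * (R 1 - P 1) - (K 1 - t*b - P 1) * (R 0 - P 0)) * gQ
      = - (t * (((R 1 - P 1))^2 + (R 0 - P 0)^2) * gQ^2) := by
    rw [ha, hb]; linear_combination gQ * hgK
  rw [hgx] at hxmem
  have hnn : 0 < (R 1 - P 1)^2 + (R 0 - P 0)^2 := by
    rcases eq_or_ne (R 1 - P 1) 0 with h0 | h0
    · rcases eq_or_ne (R 0 - P 0) 0 with h1 | h1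
      · exact absurd (by rw [h0, h1]; ring) hs
      · positivity
    · positivity
  have hgQ2 : 0 < gQ^2 := by
    have : gQ ≠ 0 := by rw [hgQ]; exact hs
    positivity
  nlinarith [mul_pos (mul_pos htpos hnn) hgQ2]

lemma stepB (w N c d nu nv : ℝ) (hc : 0 < c) (hd : 0 < d) (hnu : 0 < nu) (hnv : 0 < nv)
    (hN : 0 < N) (hNsq : N^2 = c^2*nu^2 + 2*c*d*w + d^2*nv^2)
    (hw1 : 0 < nu*nv - w) (hw2 : 0 < nu*nv + w) :
    w*N < (c*w + d*nv^2)*nu := by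
  have hNlt : N < c*nu + d*nv := by
    by_contra hcon; push_neg at hcon
    have hx : 0 < c*nu + d*nv + N := by positivity
    nlinarith [mul_pos (mul_pos hc hd) hw1, mul_nonneg (sub_nonneg.mpr hcon) hx.le]
  have hNgt : c*nu - d*nv < N := by
    by_contra hcon; push_neg at hcon
    have hx : 0 < c*nu - d*nv + N := by linarith
    nlinarith [mul_pos (mul_pos hc hd) hw2, mul_nonneg (sub_nonneg.mpr hcon) hx.le]
  rcases le_or_gt w 0 with hw | hw
  · nlinarith [mul_nonneg (neg_nonneg.mpr hw) (sub_pos.mpr hNgt).le,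
      mul_pos (mul_pos hd hnv) hw2]
  · nlinarith [mul_pos hw (sub_pos.mpr hNlt), mul_pos (mul_pos hd hnv) hw1]

lemma stepA (w Nq a b nu nv : ℝ) (ha : a < 0) (hb : 0 ≤ b) (hnu : 0 < nu) (hnv : 0 < nv)
    (hNq : 0 ≤ Nq) (hNsq : Nq^2 = a^2*nu^2 + 2*a*b*w + b^2*nv^2)
    (hw1 : 0 < nu*nv - w) (hw2 : 0 < nu*nv + w) :
    (a*nu^2 + b*w)*nv ≤ w*Nq := by
  rcases le_or_gt w 0 with hw | hw
  · have hup : Nq ≤ b*nv - a*nu := by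
      by_contra hcon; push_neg at hcon
      have hxpos : 0 ≤ b*nv - a*nu := by
        nlinarith [mul_nonneg hb hnv.le, mul_nonneg (neg_nonneg.mpr ha.le) hnu.le]
      have hsum : 0 < Nq + (b*nv - a*nu) := by linarith
      nlinarith [mul_nonneg (mul_nonneg (neg_nonneg.mpr ha.le) hb) hw2.le,
        mul_pos (sub_pos.mpr hcon) hsum]
    nlinarith [mul_nonneg (neg_nonneg.mpr hw) (sub_nonneg.mpr hup),
      mul_nonneg (mul_nonneg (neg_nonneg.mpr ha.le) hnu.le) hw2.le]
  · have hlow : b*nv + a*nu ≤ Nq := by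
      rcases le_or_gt (b*nv + a*nu) 0 with h0 | h0
      · linarith
      · by_contra hcon; push_neg at hcon
        have hsum : 0 < (b*nv + a*nu) + Nq := by linarith
        nlinarith [mul_nonneg (mul_nonneg (neg_nonneg.mpr ha.le) hb) hw1.le,
          mul_pos (sub_pos.mpr hcon) hsum]
    nlinarith [mul_nonneg hw.le (sub_nonneg.mpr hlow),
      mul_nonneg (mul_nonneg (neg_nonneg.mpr ha.le) hnu.le) hw1.le]

set_option maxHeartbeats 1000000 in
lemma prop_step (u1 u2 v1 v2 p1 p2 q1 q2 nu nv np nq : ℝ)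
    (hnu2 : nu^2 = u1^2 + u2^2) (hnv2 : nv^2 = v1^2 + v2^2)
    (hnp2 : np^2 = p1^2 + p2^2) (hnq2 : nq^2 = q1^2 + q2^2)
    (hnu : 0 < nu) (hnv : 0 < nv) (hnp : 0 < np) (hnq0 : 0 ≤ nq)
    (h1 : 0 < (u1*v2 - u2*v1) * (u1*p2 - u2*p1))
    (h2 : 0 < (u1*v2 - u2*v1) * (p1*v2 - p2*v1))
    (hcos : (q1*u1 + q2*u2) * (np*nv) = (p1*v1 + p2*v2) * (nq*nu))
    (hout : (u1*v2 - u2*v1) * (q1*v2 - q2*v1) < 0) :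
    0 < (u1*v2 - u2*v1) * (q1*u2 - q2*u1) := by
  by_contra hb
  push_neg at hb
  have hsne : (u1*v2 - u2*v1) ≠ 0 := by
    intro h; rw [h] at h1; simp at h1
  have hs2 : 0 < (u1*v2 - u2*v1)^2 := by positivity
  have hqne : 0 < q1^2 + q2^2 := by
    rcases eq_or_ne q1 0 with hq1 | hq1
    · rcases eq_or_ne q2 0 with hq2 | hq2
      · exfalso; rw [hq1, hq2] at hout; norm_num at hout
      · positivity
    · positivity
  have hnq : 0 < nq := by nlinarith [hnq2, hqne, hnq0]
  have hw2 : (u1*v1 + u2*v2)^2 + (u1*v2 - u2*v1)^2 = nu^2 * nv^2 := by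
    rw [hnu2, hnv2]; ring
  have hnunvw1 : 0 < nu*nv - (u1*v1 + u2*v2) := by
    nlinarith [hw2, hs2, mul_pos hnu hnv, sq_nonneg (nu*nv + (u1*v1+u2*v2))]
  have hnunvw2 : 0 < nu*nv + (u1*v1 + u2*v2) := by
    nlinarith [hw2, hs2, mul_pos hnu hnv, sq_nonneg (nu*nv - (u1*v1+u2*v2))]
  have hB : 0 ≤ (u1*v2 - u2*v1) * (u1*q2 - u2*q1) := by linarith [hb]
  have hNp : ((u1*v2 - u2*v1)^2 * np)^2
      = ((u1*v2 - u2*v1) * (p1*v2 - p2*v1))^2 * nu^2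
        + 2 * ((u1*v2 - u2*v1) * (p1*v2 - p2*v1)) * ((u1*v2 - u2*v1) * (u1*p2 - u2*p1)) * (u1*v1 + u2*v2)
        + ((u1*v2 - u2*v1) * (u1*p2 - u2*p1))^2 * nv^2 := by
    rw [hnu2, hnv2]; linear_combination ((u1*v2 - u2*v1)^4) * hnp2
  have hNq : ((u1*v2 - u2*v1)^2 * nq)^2
      = ((u1*v2 - u2*v1) * (q1*v2 - q2*v1))^2 * nu^2
        + 2 * ((u1*v2 - u2*v1) * (q1*v2 - q2*v1)) * ((u1*v2 - u2*v1) * (u1*q2 - u2*q1)) * (u1*v1 + u2*v2)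
        + ((u1*v2 - u2*v1) * (u1*q2 - u2*q1))^2 * nv^2 := by
    rw [hnu2, hnv2]; linear_combination ((u1*v2 - u2*v1)^4) * hnq2
  have hNppos : 0 < (u1*v2 - u2*v1)^2 * np := by positivity
  have hNqpos : 0 ≤ (u1*v2 - u2*v1)^2 * nq := by positivity
  have hBineq := stepB (u1*v1 + u2*v2) ((u1*v2 - u2*v1)^2 * np)
    ((u1*v2 - u2*v1) * (p1*v2 - p2*v1)) ((u1*v2 - u2*v1) * (u1*p2 - u2*p1)) nu nv
    h2 h1 hnu hnv hNppos hNp hnunvw1 hnunvw2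
  have hAineq := stepA (u1*v1 + u2*v2) ((u1*v2 - u2*v1)^2 * nq)
    ((u1*v2 - u2*v1) * (q1*v2 - q2*v1)) ((u1*v2 - u2*v1) * (u1*q2 - u2*q1)) nu nv
    hout hB hnu hnv hNqpos hNq hnunvw1 hnunvw2
  -- chain with hcos
  have hsqu : (u1*v2 - u2*v1)^2 * (q1*u1 + q2*u2)
      = ((u1*v2 - u2*v1) * (q1*v2 - q2*v1)) * nu^2
        + ((u1*v2 - u2*v1) * (u1*q2 - u2*q1)) * (u1*v1 + u2*v2) := by
    rw [hnu2]; ring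
  have hspv : (u1*v2 - u2*v1)^2 * (p1*v1 + p2*v2)
      = ((u1*v2 - u2*v1) * (p1*v2 - p2*v1)) * (u1*v1 + u2*v2)
        + ((u1*v2 - u2*v1) * (u1*p2 - u2*p1)) * nv^2 := by
    rw [hnv2]; ring
  have hcos2 : ((u1*v2 - u2*v1)^2 * (q1*u1 + q2*u2)) * (np*nv)
      = ((u1*v2 - u2*v1)^2 * (p1*v1 + p2*v2)) * (nq*nu) := by
    linear_combination ((u1*v2 - u2*v1)^2) * hcos
  rw [hsqu, hspv] at hcos2
  -- hAineq * np ; hBineq * nq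
  have hL : (((u1*v2 - u2*v1) * (q1*v2 - q2*v1)) * nu^2
        + ((u1*v2 - u2*v1) * (u1*q2 - u2*q1)) * (u1*v1 + u2*v2)) * (np*nv)
      ≤ ((u1*v1 + u2*v2) * ((u1*v2 - u2*v1)^2 * nq)) * np := by
    have := mul_le_mul_of_nonneg_right hAineq hnp.le
    linarith [this]
  have hR : ((u1*v1 + u2*v2) * ((u1*v2 - u2*v1)^2 * np)) * nq
      < (((u1*v2 - u2*v1) * (p1*v2 - p2*v1)) * (u1*v1 + u2*v2)
         + ((u1*v2 - u2*v1) * (u1*p2 - u2*p1)) * nv^2) * (nq*nu) := by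
    have := (mul_lt_mul_iff_left₀ hnq).mpr hBineq
    linarith [this]
  linarith [hL, hR, hcos2]

lemma norm_pos2 {x : E2} (h : 0 < (x 0)^2 + (x 1)^2) : 0 < ‖x‖ := by
  nlinarith [norm_nonneg x, normsq2 x]

lemma sumsq_pos_left {a b c d : ℝ} (h : a*d - b*c ≠ 0) : 0 < a^2 + b^2 := by
  rcases eq_or_ne a 0 with h1 | h1
  · rcases eq_or_ne b 0 with h2 | h2
    · exact absurd (by rw [h1, h2]; ring) h
    · positivity
  · positivity

lemma sumsq_pos_right {a b c d : ℝ} (h : a*d - b*c ≠ 0) : 0 < c^2 + d^2 := by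
  rcases eq_or_ne c 0 with h1 | h1
  · rcases eq_or_ne d 0 with h2 | h2
    · exact absurd (by rw [h1, h2]; ring) h
    · positivity
  · positivity

lemma sumsq_pos_of_mul {p1 p2 a b S : ℝ} (h : 0 < S*(p1*a - p2*b)) : 0 < p1^2 + p2^2 := by
  rcases eq_or_ne p1 0 with h1 | h1
  · rcases eq_or_ne p2 0 with h2 | h2
    · rw [h1, h2] at h; norm_num at h
    · positivity
  · positivity


lemma g_step (u1 u2 v1 v2 p1 p2 q1 q2 np nv nq nu : ℝ)
    (hnp2 : np^2 = p1^2+p2^2) (hnv2 : nv^2 = v1^2+v2^2)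
    (hnq2 : nq^2 = q1^2+q2^2) (hnu2 : nu^2 = u1^2+u2^2)
    (hnp : 0 < np) (hnv : 0 < nv) (hnq0 : 0 ≤ nq) (hnu0 : 0 ≤ nu)
    (hsne : (u1*v2 - u2*v1) ≠ 0)
    (hsignq : (u1*v2-u2*v1)*(q1*u2 - q2*u1) ≤ 0)
    (hsignp : 0 < (u1*v2-u2*v1)*(p1*v2 - p2*v1))
    (hcos : (q1*u1+q2*u2)*(np*nv) = (p1*v1+p2*v2)*(nq*nu)) :
    (p1*v1+p2*v2)*(q1*u2-q2*u1) + (q1*u1+q2*u2)*(p1*v2-p2*v1) = 0 := by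
  have hXY : ((q1*u2-q2*u1)*(np*nv))^2 = ((p1*v2-p2*v1)*(nq*nu))^2 := by
    have e1 : ((q1*u2-q2*u1)*(np*nv))^2
        = ((q1^2+q2^2)*(u1^2+u2^2) - (q1*u1+q2*u2)^2)*(np*nv)^2 := by ring
    have e2 : ((p1*v2-p2*v1)*(nq*nu))^2
        = ((p1^2+p2^2)*(v1^2+v2^2) - (p1*v1+p2*v2)^2)*(nq*nu)^2 := by ring
    rw [e1, e2, ← hnq2, ← hnu2, ← hnp2, ← hnv2]
    linear_combination (-((q1*u1+q2*u2)*(np*nv) + (p1*v1+p2*v2)*(nq*nu))) * hcos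
  have hsX : (u1*v2-u2*v1)*((q1*u2-q2*u1)*(np*nv)) ≤ 0 := by
    have := mul_le_mul_of_nonneg_right hsignq (mul_pos hnp hnv).le
    linarith [this]
  have hsY : 0 ≤ (u1*v2-u2*v1)*((p1*v2-p2*v1)*(nq*nu)) := by
    have := mul_le_mul_of_nonneg_right hsignp.le (mul_nonneg hnq0 hnu0)
    linarith [this]
  have hfac : ((q1*u2-q2*u1)*(np*nv) - (p1*v2-p2*v1)*(nq*nu))
      * ((q1*u2-q2*u1)*(np*nv) + (p1*v2-p2*v1)*(nq*nu)) = 0 := by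
    linear_combination hXY
  have hXeq : (q1*u2-q2*u1)*(np*nv) = -((p1*v2-p2*v1)*(nq*nu)) := by
    rcases mul_eq_zero.mp hfac with h | h
    · -- X = Y
      have hXY' : (q1*u2-q2*u1)*(np*nv) = (p1*v2-p2*v1)*(nq*nu) := by linarith
      have h0 : (u1*v2-u2*v1)*((q1*u2-q2*u1)*(np*nv)) = 0 := by
        rw [hXY'] at hsX ⊢
        linarith
      have h1 : (q1*u2-q2*u1)*(np*nv) = 0 := by
        rcases mul_eq_zero.mp h0 with h' | h'
        · exact absurd h' hsne
        · exact h'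
      rw [h1]
      rw [hXY'] at h1
      rw [h1]; ring
    · linarith
  have hG : ((p1*v1+p2*v2)*(q1*u2-q2*u1) + (q1*u1+q2*u2)*(p1*v2-p2*v1))*(np*nv) = 0 := by
    linear_combination (p1*v1+p2*v2) * hXeq + (p1*v2-p2*v1) * hcos
  have hnpv : np*nv ≠ 0 := by positivity
  exact (mul_eq_zero.mp hG).resolve_right hnpv

lemma perp_core (u1 u2 v1 v2 p1 p2 q1 q2 e f : ℝ)
    (hu : 0 < u1^2+u2^2) (hv : 0 < v1^2+v2^2)
    (w1 : (1-e)*(v1^2+v2^2) = q1*v1 + q2*v2)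
    (w2 : f*(u1^2+u2^2) = q1*u1 + q2*u2)
    (hG : (p1*v1+p2*v2)*(q1*u2-q2*u1) + (q1*u1+q2*u2)*(p1*v2-p2*v1) = 0) :
    ((1-e)*v1 - f*u1)*p1 + ((1-e)*v2 - f*u2)*p2 = 0 := by
  have key : (((1-e)*v1 - f*u1)*p1 + ((1-e)*v2 - f*u2)*p2) * ((u1^2+u2^2)*(v1^2+v2^2)) = 0 := by
    linear_combination ((p1*v1+p2*v2)*(u1^2+u2^2)) * w1 - ((p1*u1+p2*u2)*(v1^2+v2^2)) * w2
      - (u1*v2-u2*v1) * hG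
  have hne : (u1^2+u2^2)*(v1^2+v2^2) ≠ 0 := by positivity
  exact (mul_eq_zero.mp key).resolve_right hne

lemma cross_of_two_perp (x1 x2 y1 y2 p1 p2 : ℝ) (hp : 0 < p1^2+p2^2)
    (h1 : x1*p1 + x2*p2 = 0) (h2 : y1*p1 + y2*p2 = 0) : x1*y2 - x2*y1 = 0 := by
  have key : (x1*y2 - x2*y1)*(p1^2+p2^2) = 0 := by
    linear_combination (p1*y2 - p2*y1) * h1 + (x1*p2 - x2*p1) * h2
  exact (mul_eq_zero.mp key).resolve_right (by positivity)

set_option maxHeartbeats 1600000 in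
lemma core_affine (t1 t2 u1 u2 v1 v2 a b g d e f
    a1 a2 b1 b2 c1 c2 d1 d2 e1 e2 f1 f2 : ℝ)
    (ha1 : a1 = v1 + a*(u1 - v1)) (ha2 : a2 = v2 + a*(u2 - v2))
    (hb1 : b1 = t1 + b*(v1 - t1)) (hb2 : b2 = t2 + b*(v2 - t2))
    (hc1 : c1 = t1 + g*(u1 - t1)) (hc2 : c2 = t2 + g*(u2 - t2))
    (hd1 : d1 = b1 + d*(c1 - b1)) (hd2 : d2 = b2 + d*(c2 - b2))
    (he1 : e1 = c1 + e*(a1 - c1)) (he2 : e2 = c2 + e*(a2 - c2))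
    (hf1 : f1 = a1 + f*(b1 - a1)) (hf2 : f2 = a2 + f*(b2 - a2))
    (hs : (b1 - a1)*(c2 - a2) - (b2 - a2)*(c1 - a1) ≠ 0)
    (hl1 : (e1 - f1)*(u2 - v2) - (e2 - f2)*(u1 - v1) = 0)
    (hl2 : (f1 - d1)*(v2 - t2) - (f2 - d2)*(v1 - t1) = 0)
    (hl3 : (d1 - e1)*(u2 - t2) - (d2 - e2)*(u1 - t1) = 0) :
    ((e1 - d1)*(f2 - d2) - (e2 - d2)*(f1 - d1)) * ((u1 - t1)*(v2 - t2) - (u2 - t2)*(v1 - t1))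
      = ((b1 - a1)*(c2 - a2) - (b2 - a2)*(c1 - a1))^2 := by
  subst hd1 hd2 he1 he2 hf1 hf2 ha1 ha2 hb1 hb2 hc1 hc2
  have hchi : ((u1 - t1)*(v2 - t2) - (u2 - t2)*(v1 - t1)) ≠ 0 := by
    intro h; exact hs (by linear_combination (1*g + (-1)*b*g + (-1)*a*g + 1*a*b) * h)
  have hq : (1*g + (-1)*b*g + (-1)*a*g + 1*a*b) ≠ 0 := by
    intro h; exact hs (by linear_combination ((u1 - t1)*(v2 - t2) - (u2 - t2)*(v1 - t1)) * h)
  have w1 : ((-1)*1 + 1*f + 1*e + 1*g + (-1)*g*e + (-1)*b*f) * ((u1 - t1)*(v2 - t2) - (u2 - t2)*(v1 - t1)) = 0 := by linear_combination (-1 : ℝ) * hl1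
  have w2 : ((-1)*g*d + 1*a + (-1)*a*f) * ((u1 - t1)*(v2 - t2) - (u2 - t2)*(v1 - t1)) = 0 := by linear_combination hl2
  have w3 : ((-1)*e + 1*b + (-1)*b*d + 1*a*e) * ((u1 - t1)*(v2 - t2) - (u2 - t2)*(v1 - t1)) = 0 := by linear_combination (-1 : ℝ) * hl3
  have s1 : ((-1)*1 + 1*f + 1*e + 1*g + (-1)*g*e + (-1)*b*f) = 0 := by
    rcases mul_eq_zero.mp w1 with h | h
    · exact h
    · exact absurd h hchi
  have s2 : ((-1)*g*d + 1*a + (-1)*a*f) = 0 := by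
    rcases mul_eq_zero.mp w2 with h | h
    · exact h
    · exact absurd h hchi
  have s3 : ((-1)*e + 1*b + (-1)*b*d + 1*a*e) = 0 := by
    rcases mul_eq_zero.mp w3 with h | h
    · exact h
    · exact absurd h hchi
  have hp : (1*g + (-1)*g*f + (-1)*g*e + 1*g*e*f + (-1)*g*d + 1*g*d*f + 1*g*d*e + (-1)*b*g + 1*b*g*f + 1*b*g*e + (-1)*b*g*e*f + 1*b*g*d + (-1)*b*g*d*f + (-1)*b*g*d*e + (-1)*a*g + 1*a*g*f + 1*a*g*e + (-1)*a*g*e*f + 1*a*g*d + (-1)*a*g*d*f + (-1)*a*g*d*e + 1*a*b + (-1)*a*b*f + (-1)*a*b*e + 1*a*b*e*f + (-1)*a*b*d + 1*a*b*d*f + 1*a*b*d*e) = (1*g + (-1)*b*g + (-1)*a*g + 1*a*b)^2 := by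
    refine mul_left_cancel₀ (pow_ne_zero 2 hq) ?_
    linear_combination ((-1)*g^3 + 3*b*g^3 + (-3)*b^2*g^3 + 1*b^3*g^3 + 1*a*g^2 + (-1)*a*g^2*f + (-1)*a*g^2*e + 4*a*g^3 + (-5)*a*b*g^2 + 3*a*b*g^2*f + 2*a*b*g^2*e + (-9)*a*b*g^3 + 7*a*b^2*g^2 + (-3)*a*b^2*g^2*f + (-1)*a*b^2*g^2*e + 6*a*b^2*g^3 + (-3)*a*b^3*g^2 + 1*a*b^3*g^2*f + (-1)*a*b^3*g^3 + (-3)*a^2*g^2 + 3*a^2*g^2*f + 3*a^2*g^2*e + (-6)*a^2*g^3 + 2*a^2*b*g + (-2)*a^2*b*g*f + (-2)*a^2*b*g*e + 13*a^2*b*g^2 + (-6)*a^2*b*g^2*f + (-4)*a^2*b*g^2*e + 9*a^2*b*g^3 + (-5)*a^2*b^2*g + 4*a^2*b^2*g*f + 2*a^2*b^2*g*e + (-13)*a^2*b^2*g^2 + 3*a^2*b^2*g^2*f + 1*a^2*b^2*g^2*e + (-3)*a^2*b^2*g^3 + 3*a^2*b^3*g + (-2)*a^2*b^3*g*f + 3*a^2*b^3*g^2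 + 3*a^3*g^2 + (-3)*a^3*g^2*f + (-3)*a^3*g^2*e + 4*a^3*g^3 + (-4)*a^3*b*g + 4*a^3*b*g*f + 4*a^3*b*g*e + (-11)*a^3*b*g^2 + 3*a^3*b*g^2*f + 2*a^3*b*g^2*e + (-3)*a^3*b*g^3 + 1*a^3*b^2 + (-1)*a^3*b^2*f + (-1)*a^3*b^2*e + 8*a^3*b^2*g + (-4)*a^3*b^2*g*f + (-2)*a^3*b^2*g*e + 6*a^3*b^2*g^2 + (-1)*a^3*b^3 + 1*a^3*b^3*f + (-3)*a^3*b^3*g + (-1)*a^4*g^2 + 1*a^4*g^2*f + 1*a^4*g^2*e + (-1)*a^4*g^3 + 2*a^4*b*g + (-2)*a^4*b*g*f + (-2)*a^4*b*g*e + 3*a^4*b*g^2 + (-1)*a^4*b^2 + 1*a^4*b^2*f + 1*a^4*b^2*e + (-3)*a^4*b^2*g + 1*a^4*b^3) * s1 + (1*g^2 + (-1)*g^2*f + (-1)*g^2*e + (-3)*b*g^2 + 4*b*g^2*f + 3*b*g^2*e + (-1)*b*g^3 + 3*b^2*g^2 + (-6)*b^2*g^2*f + (-3)*b^2*g^2*e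 + 3*b^2*g^3 + (-1)*b^3*g^2 + 4*b^3*g^2*f + 1*b^3*g^2*e + (-3)*b^3*g^3 + (-1)*b^4*g^2*f + 1*b^4*g^3 + (-3)*a*g^2 + 3*a*g^2*f + 3*a*g^2*e + 2*a*b*g + (-2)*a*b*g*f + (-2)*a*b*g*e + 7*a*b*g^2 + (-9)*a*b*g^2*f + (-7)*a*b*g^2*e + 3*a*b*g^3 + (-4)*a*b^2*g + 6*a*b^2*g*f + 4*a*b^2*g*e + (-8)*a*b^2*g^2 + 9*a*b^2*g^2*f + 5*a*b^2*g^2*e + (-6)*a*b^2*g^3 + 2*a*b^3*g + (-6)*a*b^3*g*f + (-2)*a*b^3*g*e + 7*a*b^3*g^2 + (-3)*a*b^3*g^2*f + (-1)*a*b^3*g^2*e + 3*a*b^3*g^3 + 2*a*b^4*g*f + (-3)*a*b^4*g^2 + 3*a^2*g^2 + (-3)*a^2*g^2*f + (-3)*a^2*g^2*e + (-4)*a^2*b*g + 4*a^2*b*g*f + 4*a^2*b*g*e + (-5)*a^2*b*g^2 + 6*a^2*b*g^2*f + 5*a^2*b*g^2*e + (-3)*a^2*b*g^3 + 1*a^2*b^2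 + (-1)*a^2*b^2*f + (-1)*a^2*b^2*e + 6*a^2*b^2*g + (-8)*a^2*b^2*g*f + (-6)*a^2*b^2*g*e + 8*a^2*b^2*g^2 + (-3)*a^2*b^2*g^2*f + (-2)*a^2*b^2*g^2*e + 3*a^2*b^2*g^3 + (-1)*a^2*b^3 + 2*a^2*b^3*f + 1*a^2*b^3*e + (-5)*a^2*b^3*g + 4*a^2*b^3*g*f + 2*a^2*b^3*g*e + (-6)*a^2*b^3*g^2 + (-1)*a^2*b^4*f + 3*a^2*b^4*g + (-1)*a^3*g^2 + 1*a^3*g^2*f + 1*a^3*g^2*e + 2*a^3*b*g + (-2)*a^3*b*g*f + (-2)*a^3*b*g*e + 1*a^3*b*g^2 + (-1)*a^3*b*g^2*f + (-1)*a^3*b*g^2*e + 1*a^3*b*g^3 + (-1)*a^3*b^2 + 1*a^3*b^2*f + 1*a^3*b^2*e + (-2)*a^3*b^2*g + 2*a^3*b^2*g*f + 2*a^3*b^2*g*e + (-3)*a^3*b^2*g^2 + 1*a^3*b^3 + (-1)*a^3*b^3*f + (-1)*a^3*b^3*e + 3*a^3*b^3*g + (-1)*a^3*b^4) * s2 + ((-1)*g^3*f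 + 1*g^4 + 3*b*g^3*f + (-3)*b*g^4 + (-3)*b^2*g^3*f + 3*b^2*g^4 + 1*b^3*g^3*f + (-1)*b^3*g^4 + 1*a*g^2 + (-1)*a*g^2*f + (-1)*a*g^2*e + (-1)*a*g^3 + 3*a*g^3*f + 1*a*g^3*e + (-3)*a*g^4 + (-2)*a*b*g^2 + 2*a*b*g^2*e + 5*a*b*g^3 + (-6)*a*b*g^3*f + (-2)*a*b*g^3*e + 6*a*b*g^4 + 1*a*b^2*g^2 + 3*a*b^2*g^2*f + (-1)*a*b^2*g^2*e + (-7)*a*b^2*g^3 + 3*a*b^2*g^3*f + 1*a*b^2*g^3*e + (-3)*a*b^2*g^4 + (-2)*a*b^3*g^2*f + 3*a*b^3*g^3 + (-2)*a^2*g^2 + 2*a^2*g^2*f + 2*a^2*g^2*e + 2*a^2*g^3 + (-3)*a^2*g^3*f + (-2)*a^2*g^3*e + 3*a^2*g^4 + 2*a^2*b*g + (-2)*a^2*b*g*f + (-2)*a^2*b*g*e + 2*a^2*b*g^2*f + (-8)*a^2*b*g^3 + 3*a^2*b*g^3*f + 2*a^2*b*g^3*e + (-3)*a^2*b*g^4 +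 (-2)*a^2*b^2*g + 1*a^2*b^2*g*f + 2*a^2*b^2*g*e + 5*a^2*b^2*g^2 + (-4)*a^2*b^2*g^2*f + (-2)*a^2*b^2*g^2*e + 6*a^2*b^2*g^3 + 1*a^2*b^3*g*f + (-3)*a^2*b^3*g^2 + 1*a^3*g^2 + (-1)*a^3*g^2*f + (-1)*a^3*g^2*e + (-1)*a^3*g^3 + 1*a^3*g^3*f + 1*a^3*g^3*e + (-1)*a^3*g^4 + (-2)*a^3*b*g + 2*a^3*b*g*f + 2*a^3*b*g*e + 2*a^3*b*g^2 + (-2)*a^3*b*g^2*f + (-2)*a^3*b*g^2*e + 3*a^3*b*g^3 + 1*a^3*b^2 + (-1)*a^3*b^2*f + (-1)*a^3*b^2*e + (-1)*a^3*b^2*g + 1*a^3*b^2*g*f + 1*a^3*b^2*g*e + (-3)*a^3*b^2*g^2 + 1*a^3*b^3*g) * s3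
  linear_combination (((u1 - t1)*(v2 - t2) - (u2 - t2)*(v1 - t1))^2) * hp

set_option maxHeartbeats 4000000 in
theorem pedal_antipedal_product (A B C K K₁ D E F T U V : EuclideanSpace ℝ (Fin 2))
    (hABC : AffineIndependent ℝ ![A, B, C])
    (hK : K ∈ interior (convexHull ℝ ({A, B, C} : Set (EuclideanSpace ℝ (Fin 2)))))
    (hK₁ : IsIsogonalConj A B C K K₁)
    (hD : IsFoot K₁ D B C) (hE : IsFoot K₁ E C A) (hF : IsFoot K₁ F A B)
    (hA : A ∈ affineSpan ℝ ({V, U} : Set (EuclideanSpace ℝ (Fin 2))))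
    (hAperp : inner ℝ (A - K) (U - V) = (0 : ℝ))
    (hB : B ∈ affineSpan ℝ ({T, V} : Set (EuclideanSpace ℝ (Fin 2))))
    (hBperp : inner ℝ (B - K) (V - T) = (0 : ℝ))
    (hCmem : C ∈ affineSpan ℝ ({T, U} : Set (EuclideanSpace ℝ (Fin 2))))
    (hCperp : inner ℝ (C - K) (U - T) = (0 : ℝ)) :
    triArea D E F * triArea T U V = (triArea A B C) ^ 2 := by
  obtain ⟨hang1, hang2, hang3⟩ := hK₁
  have hs : (B 0 - A 0) * (C 1 - A 1) - (B 1 - A 1) * (C 0 - A 0) ≠ 0 :=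
    cross_ne_of_affineIndependent hABC
  -- cross nondegeneracy at vertices B and C
  have hsB : (C 0 - B 0) * (A 1 - B 1) - (C 1 - B 1) * (A 0 - B 0) ≠ 0 := by
    intro h; apply hs; linear_combination h
  have hsC : (A 0 - C 0) * (B 1 - C 1) - (A 1 - C 1) * (B 0 - C 0) ≠ 0 := by
    intro h; apply hs; linear_combination h
  -- permuted hulls
  have e1 : ({A,B,C} : Set (EuclideanSpace ℝ (Fin 2))) = {A,C,B} := by rw [Set.pair_comm B C]
  have e2 : ({A,B,C} : Set (EuclideanSpace ℝ (Fin 2))) = {B,A,C} := by rw [Set.insert_comm]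
  have e3 : ({A,B,C} : Set (EuclideanSpace ℝ (Fin 2))) = {B,C,A} := by
    rw [Set.insert_comm, Set.pair_comm A C]
  have e4 : ({A,B,C} : Set (EuclideanSpace ℝ (Fin 2))) = {C,A,B} := by
    rw [Set.pair_comm B C, Set.insert_comm]
  have e5 : ({A,B,C} : Set (EuclideanSpace ℝ (Fin 2))) = {C,B,A} := by
    rw [Set.insert_comm, Set.pair_comm A C, Set.insert_comm]
  -- six interior sign facts
  have h2A : 0 < ((B 0 - A 0) * (C 1 - A 1) - (B 1 - A 1) * (C 0 - A 0)) *
      ((K 0 - A 0) * (C 1 - A 1) - (K 1 - A 1) * (C 0 - A 0)) := by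
    have h := interior_sign A B C K hK hs
    linarith [h]
  have h1A : 0 < ((B 0 - A 0) * (C 1 - A 1) - (B 1 - A 1) * (C 0 - A 0)) *
      ((B 0 - A 0) * (K 1 - A 1) - (B 1 - A 1) * (K 0 - A 0)) := by
    have h := interior_sign A C B K (by rwa [e1] at hK)
      (by intro h; apply hs; linear_combination -h)
    linarith [h]
  have h2B : 0 < ((B 0 - A 0) * (C 1 - A 1) - (B 1 - A 1) * (C 0 - A 0)) *
      ((K 0 - B 0) * (A 1 - B 1) - (K 1 - B 1) * (A 0 - B 0)) := by
    have h := interior_sign B C A K (by rwa [e3] at hK)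
      (by intro h; apply hs; linear_combination h)
    linarith [h]
  have h1B : 0 < ((B 0 - A 0) * (C 1 - A 1) - (B 1 - A 1) * (C 0 - A 0)) *
      ((C 0 - B 0) * (K 1 - B 1) - (C 1 - B 1) * (K 0 - B 0)) := by
    have h := interior_sign B A C K (by rwa [e2] at hK)
      (by intro h; apply hs; linear_combination -h)
    linarith [h]
  have h2C : 0 < ((B 0 - A 0) * (C 1 - A 1) - (B 1 - A 1) * (C 0 - A 0)) *
      ((K 0 - C 0) * (B 1 - C 1) - (K 1 - C 1) * (B 0 - C 0)) := by
    have h := interior_sign C A B K (by rwa [e4] at hK)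
      (by intro h; apply hs; linear_combination h)
    linarith [h]
  have h1C : 0 < ((B 0 - A 0) * (C 1 - A 1) - (B 1 - A 1) * (C 0 - A 0)) *
      ((A 0 - C 0) * (K 1 - C 1) - (A 1 - C 1) * (K 0 - C 0)) := by
    have h := interior_sign C B A K (by rwa [e5] at hK)
      (by intro h; apply hs; linear_combination -h)
    linarith [h]
  -- norm squares
  have nBA2 : ‖B - A‖^2 = (B 0 - A 0)^2 + (B 1 - A 1)^2 := by rw [normsq2]; simp [sub_apply2]
  have nCA2 : ‖C - A‖^2 = (C 0 - A 0)^2 + (C 1 - A 1)^2 := by rw [normsq2]; simp [sub_apply2]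
  have nKA2 : ‖K - A‖^2 = (K 0 - A 0)^2 + (K 1 - A 1)^2 := by rw [normsq2]; simp [sub_apply2]
  have nQA2 : ‖K₁ - A‖^2 = (K₁ 0 - A 0)^2 + (K₁ 1 - A 1)^2 := by rw [normsq2]; simp [sub_apply2]
  have nCB2 : ‖C - B‖^2 = (C 0 - B 0)^2 + (C 1 - B 1)^2 := by rw [normsq2]; simp [sub_apply2]
  have nAB2 : ‖A - B‖^2 = (A 0 - B 0)^2 + (A 1 - B 1)^2 := by rw [normsq2]; simp [sub_apply2]
  have nKB2 : ‖K - B‖^2 = (K 0 - B 0)^2 + (K 1 - B 1)^2 := by rw [normsq2]; simp [sub_apply2]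
  have nQB2 : ‖K₁ - B‖^2 = (K₁ 0 - B 0)^2 + (K₁ 1 - B 1)^2 := by rw [normsq2]; simp [sub_apply2]
  have nAC2 : ‖A - C‖^2 = (A 0 - C 0)^2 + (A 1 - C 1)^2 := by rw [normsq2]; simp [sub_apply2]
  have nBC2 : ‖B - C‖^2 = (B 0 - C 0)^2 + (B 1 - C 1)^2 := by rw [normsq2]; simp [sub_apply2]
  have nKC2 : ‖K - C‖^2 = (K 0 - C 0)^2 + (K 1 - C 1)^2 := by rw [normsq2]; simp [sub_apply2]
  have nQC2 : ‖K₁ - C‖^2 = (K₁ 0 - C 0)^2 + (K₁ 1 - C 1)^2 := by rw [normsq2]; simp [sub_apply2]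
  -- norm positivity
  have pBA : 0 < ‖B - A‖ := by
    refine norm_pos2 ?_; rw [sub_apply2, sub_apply2]; exact sumsq_pos_left hs
  have pCA : 0 < ‖C - A‖ := by
    refine norm_pos2 ?_; rw [sub_apply2, sub_apply2]; exact sumsq_pos_right hs
  have pKA : 0 < ‖K - A‖ := by
    refine norm_pos2 ?_; rw [sub_apply2, sub_apply2]; exact sumsq_pos_of_mul h2A
  have pCB : 0 < ‖C - B‖ := by
    refine norm_pos2 ?_; rw [sub_apply2, sub_apply2]; exact sumsq_pos_left hsB
  have pAB : 0 < ‖A - B‖ := by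
    refine norm_pos2 ?_; rw [sub_apply2, sub_apply2]; exact sumsq_pos_right hsB
  have pKB : 0 < ‖K - B‖ := by
    refine norm_pos2 ?_; rw [sub_apply2, sub_apply2]; exact sumsq_pos_of_mul h2B
  have pAC : 0 < ‖A - C‖ := by
    refine norm_pos2 ?_; rw [sub_apply2, sub_apply2]; exact sumsq_pos_left hsC
  have pBC : 0 < ‖B - C‖ := by
    refine norm_pos2 ?_; rw [sub_apply2, sub_apply2]; exact sumsq_pos_right hsC
  have pKC : 0 < ‖K - C‖ := by
    refine norm_pos2 ?_; rw [sub_apply2, sub_apply2]; exact sumsq_pos_of_mul h2C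
  -- cosine product identities
  have hangA : InnerProductGeometry.angle (K₁ - A) (B - A) = InnerProductGeometry.angle (K - A) (C - A) := by
    have h := hang1
    unfold EuclideanGeometry.angle at h
    simpa [vsub_eq_sub] using h
  have hangB : InnerProductGeometry.angle (K₁ - B) (C - B) = InnerProductGeometry.angle (K - B) (A - B) := by
    have h := hang2
    unfold EuclideanGeometry.angle at h
    simpa [vsub_eq_sub] using h
  have hangC : InnerProductGeometry.angle (K₁ - C) (A - C) = InnerProductGeometry.angle (K - C) (B - C) := by
    have h := hang3
    unfold EuclideanGeometry.angle at h
    simpa [vsub_eq_sub] using h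
  have hcA : ((K₁ 0 - A 0) * (B 0 - A 0) + (K₁ 1 - A 1) * (B 1 - A 1)) * (‖K - A‖ * ‖C - A‖)
      = ((K 0 - A 0) * (C 0 - A 0) + (K 1 - A 1) * (C 1 - A 1)) * (‖K₁ - A‖ * ‖B - A‖) := by
    have h1 := InnerProductGeometry.cos_angle_mul_norm_mul_norm (K₁ - A) (B - A)
    have h2 := InnerProductGeometry.cos_angle_mul_norm_mul_norm (K - A) (C - A)
    rw [inner2] at h1 h2
    simp only [sub_apply2] at h1 h2
    rw [← h1, ← h2, hangA]; ring
  have hcB : ((K₁ 0 - B 0) * (C 0 - B 0) + (K₁ 1 - B 1) * (C 1 - B 1)) * (‖K - B‖ * ‖A - B‖)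
      = ((K 0 - B 0) * (A 0 - B 0) + (K 1 - B 1) * (A 1 - B 1)) * (‖K₁ - B‖ * ‖C - B‖) := by
    have h1 := InnerProductGeometry.cos_angle_mul_norm_mul_norm (K₁ - B) (C - B)
    have h2 := InnerProductGeometry.cos_angle_mul_norm_mul_norm (K - B) (A - B)
    rw [inner2] at h1 h2
    simp only [sub_apply2] at h1 h2
    rw [← h1, ← h2, hangB]; ring
  have hcC : ((K₁ 0 - C 0) * (A 0 - C 0) + (K₁ 1 - C 1) * (A 1 - C 1)) * (‖K - C‖ * ‖B - C‖)
      = ((K 0 - C 0) * (B 0 - C 0) + (K 1 - C 1) * (B 1 - C 1)) * (‖K₁ - C‖ * ‖A - C‖) := by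
    have h1 := InnerProductGeometry.cos_angle_mul_norm_mul_norm (K₁ - C) (A - C)
    have h2 := InnerProductGeometry.cos_angle_mul_norm_mul_norm (K - C) (B - C)
    rw [inner2] at h1 h2
    simp only [sub_apply2] at h1 h2
    rw [← h1, ← h2, hangC]; ring
  -- outside propagation implications
  have impAB_BC : ((B 0 - A 0) * (C 1 - A 1) - (B 1 - A 1) * (C 0 - A 0)) *
        ((B 0 - A 0) * (K₁ 1 - A 1) - (B 1 - A 1) * (K₁ 0 - A 0)) < 0 →
      ((B 0 - A 0) * (C 1 - A 1) - (B 1 - A 1) * (C 0 - A 0)) *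
        ((C 0 - B 0) * (K₁ 1 - B 1) - (C 1 - B 1) * (K₁ 0 - B 0)) < 0 := by
    intro hOut
    have h := prop_step (C 0 - B 0) (C 1 - B 1) (A 0 - B 0) (A 1 - B 1)
      (K 0 - B 0) (K 1 - B 1) (K₁ 0 - B 0) (K₁ 1 - B 1)
      ‖C - B‖ ‖A - B‖ ‖K - B‖ ‖K₁ - B‖ nCB2 nAB2 nKB2 nQB2
      pCB pAB pKB (norm_nonneg _)
      (by linarith [h1B]) (by linarith [h2B]) hcB (by linarith [hOut])
    linarith [h]
  have impBC_CA : ((B 0 - A 0) * (C 1 - A 1) - (B 1 - A 1) * (C 0 - A 0)) *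
        ((C 0 - B 0) * (K₁ 1 - B 1) - (C 1 - B 1) * (K₁ 0 - B 0)) < 0 →
      ((B 0 - A 0) * (C 1 - A 1) - (B 1 - A 1) * (C 0 - A 0)) *
        ((A 0 - C 0) * (K₁ 1 - C 1) - (A 1 - C 1) * (K₁ 0 - C 0)) < 0 := by
    intro hOut
    have h := prop_step (A 0 - C 0) (A 1 - C 1) (B 0 - C 0) (B 1 - C 1)
      (K 0 - C 0) (K 1 - C 1) (K₁ 0 - C 0) (K₁ 1 - C 1)
      ‖A - C‖ ‖B - C‖ ‖K - C‖ ‖K₁ - C‖ nAC2 nBC2 nKC2 nQC2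
      pAC pBC pKC (norm_nonneg _)
      (by linarith [h1C]) (by linarith [h2C]) hcC (by linarith [hOut])
    linarith [h]
  have impCA_AB : ((B 0 - A 0) * (C 1 - A 1) - (B 1 - A 1) * (C 0 - A 0)) *
        ((A 0 - C 0) * (K₁ 1 - C 1) - (A 1 - C 1) * (K₁ 0 - C 0)) < 0 →
      ((B 0 - A 0) * (C 1 - A 1) - (B 1 - A 1) * (C 0 - A 0)) *
        ((B 0 - A 0) * (K₁ 1 - A 1) - (B 1 - A 1) * (K₁ 0 - A 0)) < 0 := by
    intro hOut
    have h := prop_step (B 0 - A 0) (B 1 - A 1) (C 0 - A 0) (C 1 - A 1)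
      (K 0 - A 0) (K 1 - A 1) (K₁ 0 - A 0) (K₁ 1 - A 1)
      ‖B - A‖ ‖C - A‖ ‖K - A‖ ‖K₁ - A‖ nBA2 nCA2 nKA2 nQA2
      pBA pCA pKA (norm_nonneg _)
      (by linarith [h1A]) (by linarith [h2A]) hcA (by linarith [hOut])
    linarith [h]
  -- S^2 positive
  have hs2pos : 0 < ((B 0 - A 0) * (C 1 - A 1) - (B 1 - A 1) * (C 0 - A 0))^2 :=
    (sq_nonneg _).lt_of_ne (Ne.symm (pow_ne_zero 2 hs))
  -- sum identity for the contradiction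
  have hsum : ((B 0 - A 0) * (C 1 - A 1) - (B 1 - A 1) * (C 0 - A 0)) *
        ((B 0 - A 0) * (K₁ 1 - A 1) - (B 1 - A 1) * (K₁ 0 - A 0))
      + ((B 0 - A 0) * (C 1 - A 1) - (B 1 - A 1) * (C 0 - A 0)) *
        ((C 0 - B 0) * (K₁ 1 - B 1) - (C 1 - B 1) * (K₁ 0 - B 0))
      + ((B 0 - A 0) * (C 1 - A 1) - (B 1 - A 1) * (C 0 - A 0)) *
        ((A 0 - C 0) * (K₁ 1 - C 1) - (A 1 - C 1) * (K₁ 0 - C 0))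
      = ((B 0 - A 0) * (C 1 - A 1) - (B 1 - A 1) * (C 0 - A 0))^2 := by ring
  -- weak inside facts
  have inAB : 0 ≤ ((B 0 - A 0) * (C 1 - A 1) - (B 1 - A 1) * (C 0 - A 0)) *
      ((B 0 - A 0) * (K₁ 1 - A 1) - (B 1 - A 1) * (K₁ 0 - A 0)) := by
    by_contra hcon
    push_neg at hcon
    have o2 := impAB_BC hcon
    have o3 := impBC_CA o2
    linarith [hsum, hs2pos, hcon, o2, o3]
  have inBC : 0 ≤ ((B 0 - A 0) * (C 1 - A 1) - (B 1 - A 1) * (C 0 - A 0)) *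
      ((C 0 - B 0) * (K₁ 1 - B 1) - (C 1 - B 1) * (K₁ 0 - B 0)) := by
    by_contra hcon
    push_neg at hcon
    have o3 := impBC_CA hcon
    have o1 := impCA_AB o3
    linarith [hsum, hs2pos, hcon, o3, o1]
  have inCA : 0 ≤ ((B 0 - A 0) * (C 1 - A 1) - (B 1 - A 1) * (C 0 - A 0)) *
      ((A 0 - C 0) * (K₁ 1 - C 1) - (A 1 - C 1) * (K₁ 0 - C 0)) := by
    by_contra hcon
    push_neg at hcon
    have o1 := impCA_AB hcon
    have o2 := impAB_BC o1
    linarith [hsum, hs2pos, hcon, o1, o2]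
  -- G identities at the three vertices
  have hGA := g_step (B 0 - A 0) (B 1 - A 1) (C 0 - A 0) (C 1 - A 1)
    (K 0 - A 0) (K 1 - A 1) (K₁ 0 - A 0) (K₁ 1 - A 1)
    ‖K - A‖ ‖C - A‖ ‖K₁ - A‖ ‖B - A‖ nKA2 nCA2 nQA2 nBA2
    pKA pCA (norm_nonneg _) (norm_nonneg _) hs
    (by linarith [inAB]) (by linarith [h2A]) hcA
  have hGB := g_step (C 0 - B 0) (C 1 - B 1) (A 0 - B 0) (A 1 - B 1)
    (K 0 - B 0) (K 1 - B 1) (K₁ 0 - B 0) (K₁ 1 - B 1)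
    ‖K - B‖ ‖A - B‖ ‖K₁ - B‖ ‖C - B‖ nKB2 nAB2 nQB2 nCB2
    pKB pAB (norm_nonneg _) (norm_nonneg _) hsB
    (by linarith [inBC]) (by linarith [h2B]) hcB
  have hGC := g_step (A 0 - C 0) (A 1 - C 1) (B 0 - C 0) (B 1 - C 1)
    (K 0 - C 0) (K 1 - C 1) (K₁ 0 - C 0) (K₁ 1 - C 1)
    ‖K - C‖ ‖B - C‖ ‖K₁ - C‖ ‖A - C‖ nKC2 nBC2 nQC2 nAC2
    pKC pBC (norm_nonneg _) (norm_nonneg _) hsC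
    (by linarith [inCA]) (by linarith [h2C]) hcC
  -- parameters
  obtain ⟨d, hd0, hd1⟩ := param_of_mem hD.1
  obtain ⟨ee, he0, he1⟩ := param_of_mem hE.1
  obtain ⟨ff, hf0, hf1⟩ := param_of_mem hF.1
  obtain ⟨a, ha0, ha1⟩ := param_of_mem hA
  obtain ⟨b, hb0, hb1⟩ := param_of_mem hB
  obtain ⟨g, hg0, hg1⟩ := param_of_mem hCmem
  -- foot perpendicular equations in coordinates
  have hDp : (K₁ 0 - D 0) * (C 0 - B 0) + (K₁ 1 - D 1) * (C 1 - B 1) = 0 := by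
    have h := hD.2; rw [inner2] at h; simpa [sub_apply2] using h
  have hEp : (K₁ 0 - E 0) * (A 0 - C 0) + (K₁ 1 - E 1) * (A 1 - C 1) = 0 := by
    have h := hE.2; rw [inner2] at h; simpa [sub_apply2] using h
  have hFp : (K₁ 0 - F 0) * (B 0 - A 0) + (K₁ 1 - F 1) * (B 1 - A 1) = 0 := by
    have h := hF.2; rw [inner2] at h; simpa [sub_apply2] using h
  rw [hd0, hd1] at hDp
  rw [he0, he1] at hEp
  rw [hf0, hf1] at hFp
  have wDB : d*((C 0 - B 0)^2+(C 1 - B 1)^2)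
      = (K₁ 0 - B 0)*(C 0 - B 0) + (K₁ 1 - B 1)*(C 1 - B 1) := by linear_combination -hDp
  have wDC : (1-d)*((B 0 - C 0)^2+(B 1 - C 1)^2)
      = (K₁ 0 - C 0)*(B 0 - C 0) + (K₁ 1 - C 1)*(B 1 - C 1) := by linear_combination hDp
  have wEC : ee*((A 0 - C 0)^2+(A 1 - C 1)^2)
      = (K₁ 0 - C 0)*(A 0 - C 0) + (K₁ 1 - C 1)*(A 1 - C 1) := by linear_combination -hEp
  have wEA : (1-ee)*((C 0 - A 0)^2+(C 1 - A 1)^2)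
      = (K₁ 0 - A 0)*(C 0 - A 0) + (K₁ 1 - A 1)*(C 1 - A 1) := by linear_combination hEp
  have wFA : ff*((B 0 - A 0)^2+(B 1 - A 1)^2)
      = (K₁ 0 - A 0)*(B 0 - A 0) + (K₁ 1 - A 1)*(B 1 - A 1) := by linear_combination -hFp
  have wFB : (1-ff)*((A 0 - B 0)^2+(A 1 - B 1)^2)
      = (K₁ 0 - B 0)*(A 0 - B 0) + (K₁ 1 - B 1)*(A 1 - B 1) := by linear_combination hFp
  -- sum-of-squares positivity in raw form
  have qBA : 0 < (B 0 - A 0)^2 + (B 1 - A 1)^2 := sumsq_pos_left hs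
  have qCA : 0 < (C 0 - A 0)^2 + (C 1 - A 1)^2 := sumsq_pos_right hs
  have qCB : 0 < (C 0 - B 0)^2 + (C 1 - B 1)^2 := sumsq_pos_left hsB
  have qAB : 0 < (A 0 - B 0)^2 + (A 1 - B 1)^2 := sumsq_pos_right hsB
  have qAC : 0 < (A 0 - C 0)^2 + (A 1 - C 1)^2 := sumsq_pos_left hsC
  have qBC : 0 < (B 0 - C 0)^2 + (B 1 - C 1)^2 := sumsq_pos_right hsC
  have qKA : 0 < (K 0 - A 0)^2 + (K 1 - A 1)^2 := sumsq_pos_of_mul h2A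
  have qKB : 0 < (K 0 - B 0)^2 + (K 1 - B 1)^2 := sumsq_pos_of_mul h2B
  have qKC : 0 < (K 0 - C 0)^2 + (K 1 - C 1)^2 := sumsq_pos_of_mul h2C
  -- perpendicularity of pedal sides to the cevian directions
  have hperpA := perp_core (B 0 - A 0) (B 1 - A 1) (C 0 - A 0) (C 1 - A 1)
    (K 0 - A 0) (K 1 - A 1) (K₁ 0 - A 0) (K₁ 1 - A 1) ee ff qBA qCA wEA wFA hGA
  have hperpB := perp_core (C 0 - B 0) (C 1 - B 1) (A 0 - B 0) (A 1 - B 1)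
    (K 0 - B 0) (K 1 - B 1) (K₁ 0 - B 0) (K₁ 1 - B 1) ff d qCB qAB wFB wDB hGB
  have hperpC := perp_core (A 0 - C 0) (A 1 - C 1) (B 0 - C 0) (B 1 - C 1)
    (K 0 - C 0) (K 1 - C 1) (K₁ 0 - C 0) (K₁ 1 - C 1) d ee qAC qBC wDC wEC hGC
  have hEFp : (E 0 - F 0) * (K 0 - A 0) + (E 1 - F 1) * (K 1 - A 1) = 0 := by
    rw [he0, he1, hf0, hf1]; linear_combination hperpA
  have hFDp : (F 0 - D 0) * (K 0 - B 0) + (F 1 - D 1) * (K 1 - B 1) = 0 := by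
    rw [hf0, hf1, hd0, hd1]; linear_combination hperpB
  have hDEp : (D 0 - E 0) * (K 0 - C 0) + (D 1 - E 1) * (K 1 - C 1) = 0 := by
    rw [hd0, hd1, he0, he1]; linear_combination hperpC
  -- antipedal side perpendicularities
  have hUVp : (U 0 - V 0) * (K 0 - A 0) + (U 1 - V 1) * (K 1 - A 1) = 0 := by
    have h := hAperp; rw [inner2] at h; simp only [sub_apply2] at h; linear_combination -h
  have hVTp : (V 0 - T 0) * (K 0 - B 0) + (V 1 - T 1) * (K 1 - B 1) = 0 := by
    have h := hBperp; rw [inner2] at h; simp only [sub_apply2] at h; linear_combination -h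
  have hUTp : (U 0 - T 0) * (K 0 - C 0) + (U 1 - T 1) * (K 1 - C 1) = 0 := by
    have h := hCperp; rw [inner2] at h; simp only [sub_apply2] at h; linear_combination -h
  -- parallelism
  have hl1 := cross_of_two_perp (E 0 - F 0) (E 1 - F 1) (U 0 - V 0) (U 1 - V 1)
    (K 0 - A 0) (K 1 - A 1) qKA hEFp hUVp
  have hl2 := cross_of_two_perp (F 0 - D 0) (F 1 - D 1) (V 0 - T 0) (V 1 - T 1)
    (K 0 - B 0) (K 1 - B 1) qKB hFDp hVTp
  have hl3 := cross_of_two_perp (D 0 - E 0) (D 1 - E 1) (U 0 - T 0) (U 1 - T 1)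
    (K 0 - C 0) (K 1 - C 1) qKC hDEp hUTp
  -- the affine core
  have hcore := core_affine (T 0) (T 1) (U 0) (U 1) (V 0) (V 1) a b g d ee ff
    (A 0) (A 1) (B 0) (B 1) (C 0) (C 1) (D 0) (D 1) (E 0) (E 1) (F 0) (F 1)
    ha0 ha1 hb0 hb1 hg0 hg1 hd0 hd1 he0 he1 hf0 hf1 hs hl1 hl2 hl3
  -- finish
  simp only [triArea]
  rw [div_mul_div_comm, ← abs_mul, hcore]
  rw [abs_of_nonneg (sq_nonneg _), div_pow, sq_abs]
  norm_num
end

section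
/- Let ABC be a nondegenerate triangle with circumcenter O and circumradius R, and let H be its orthocenter with orthic triangle A'B'C' (feet of the altitudes). Then area(A'B'C')/area(ABC) = |R² − OH²|/(4R²). -/
open EuclideanGeometry Real

set_option maxHeartbeats 1000000 in
lemma orthic_key (b0 b1 c0 c1 o0 o1 h0 h1 a'0 a'1 b'0 b'1 c'0 c'1 ta tb tc r : ℝ)
    (hS : b0*c1 - b1*c0 ≠ 0)
    (hnbc : (c0-b0)^2+(c1-b1)^2 ≠ 0)
    (hnca : c0^2+c1^2 ≠ 0)
    (hnab : b0^2+b1^2 ≠ 0)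
    (e1 : o0^2+o1^2 = r^2)
    (e2 : (o0-b0)^2+(o1-b1)^2 = r^2)
    (e3 : (o0-c0)^2+(o1-c1)^2 = r^2)
    (f1 : h0*(c0-b0)+h1*(c1-b1) = 0)
    (f2 : (h0-b0)*c0+(h1-b1)*c1 = 0)
    (f3 : (h0-c0)*b0+(h1-c1)*b1 = 0)
    (ha0 : a'0 = b0 + ta*(c0-b0)) (ha1 : a'1 = b1 + ta*(c1-b1))
    (ga : (h0-a'0)*(c0-b0)+(h1-a'1)*(c1-b1) = 0)
    (hb0 : b'0 = c0 + tb*(0-c0)) (hb1 : b'1 = c1 + tb*(0-c1))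
    (gb : (h0-b'0)*(0-c0)+(h1-b'1)*(0-c1) = 0)
    (hc0 : c'0 = tc*b0) (hc1 : c'1 = tc*b1)
    (gc : (h0-c'0)*b0+(h1-c'1)*b1 = 0) :
    4*r^2*((b'0-a'0)*(c'1-a'1)-(b'1-a'1)*(c'0-a'0))
      = (r^2 - ((o0-h0)^2+(o1-h1)^2)) * (b0*c1-b1*c0) := by
  subst ha0 ha1 hb0 hb1 hc0 hc1
  have hta : ta = (b0*(b0-c0)+b1*(b1-c1))/((c0-b0)^2+(c1-b1)^2) := by
    field_simp
    linear_combination f1 - ga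
  have htb : tb = (c0*(c0-b0)+c1*(c1-b1))/(c0^2+c1^2) := by
    field_simp
    linear_combination -f2 - gb
  have htc : tc = (b0*c0+b1*c1)/(b0^2+b1^2) := by
    field_simp
    linear_combination f3 - gc
  subst hta htb htc
  have hh0 : h0 = (b0*c0+b1*c1)*(c1-b1)/(b0*c1-b1*c0) := by
    rw [eq_div_iff hS]
    linear_combination c1*f3 - b1*f2
  have hh1 : h1 = (b0*c0+b1*c1)*(b0-c0)/(b0*c1-b1*c0) := by
    rw [eq_div_iff hS]
    linear_combination b0*f2 - c0*f3
  subst hh0 hh1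
  have h2 : (2:ℝ) * (b0*c1-b1*c0) ≠ 0 := by
    simpa using hS
  have ho0 : o0 = ((b0^2+b1^2)*c1-(c0^2+c1^2)*b1)/(2*(b0*c1-b1*c0)) := by
    rw [eq_div_iff h2]
    linear_combination c1*(e1-e2) - b1*(e1-e3)
  have ho1 : o1 = ((c0^2+c1^2)*b0-(b0^2+b1^2)*c0)/(2*(b0*c1-b1*c0)) := by
    rw [eq_div_iff h2]
    linear_combination b0*(e1-e3) - c0*(e1-e2)
  subst ho0 ho1
  rw [← e1]
  field_simp
  ring

lemma dist_sq (X Y : EuclideanSpace ℝ (Fin 2)) :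
    dist X Y ^ 2 = (X 0 - Y 0)^2 + (X 1 - Y 1)^2 := by
  rw [EuclideanSpace.dist_eq, Real.sq_sqrt (by positivity)]
  simp [Fin.sum_univ_two, Real.dist_eq, sq_abs]

lemma inner_comp (X Y : EuclideanSpace ℝ (Fin 2)) :
    (inner ℝ X Y : ℝ) = X 0 * Y 0 + X 1 * Y 1 := by
  simp [PiLp.inner_apply, Fin.sum_univ_two, RCLike.inner_apply, conj_trivial, mul_comm]

lemma comp_eq_of (X Y : EuclideanSpace ℝ (Fin 2)) (h : (Y 0 - X 0)^2 + (Y 1 - X 1)^2 = 0) :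
    X = Y := by
  have h0 : X 0 = Y 0 := by nlinarith [sq_nonneg (Y 0 - X 0), sq_nonneg (Y 1 - X 1)]
  have h1 : X 1 = Y 1 := by nlinarith [sq_nonneg (Y 0 - X 0), sq_nonneg (Y 1 - X 1)]
  ext i
  fin_cases i <;> assumption

lemma collinear_of (A B C : EuclideanSpace ℝ (Fin 2))
    (hnab : (B 0 - A 0)^2 + (B 1 - A 1)^2 ≠ 0)
    (h : (B 0 - A 0)*(C 1 - A 1) - (B 1 - A 1)*(C 0 - A 0) = 0) :
    Collinear ℝ ({A, B, C} : Set (EuclideanSpace ℝ (Fin 2))) := by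
  rw [collinear_iff_of_mem (Set.mem_insert A {B, C})]
  refine ⟨B - A, ?_⟩
  rintro p (rfl | rfl | rfl)
  · exact ⟨0, by simp⟩
  · refine ⟨1, ?_⟩
    ext i
    fin_cases i <;> simp
  · refine ⟨((p 0 - A 0)*(B 0 - A 0)+(p 1 - A 1)*(B 1 - A 1)) /
      ((B 0 - A 0)^2 + (B 1 - A 1)^2), ?_⟩
    ext i
    fin_cases i
    · show p 0 = _ / _ * (B 0 - A 0) + A 0
      field_simp
      linear_combination -(B 1 - A 1) * h
    · show p 1 = _ / _ * (B 1 - A 1) + A 1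
      field_simp
      linear_combination (B 0 - A 0) * h

theorem orthic_triangle_area (A B C O H A' B' C' : EuclideanSpace ℝ (Fin 2)) (R : ℝ)
    (hABC : AffineIndependent ℝ ![A, B, C])
    (hOA : dist O A = R) (hOB : dist O B = R) (hOC : dist O C = R)
    (hH₁ : inner ℝ (H - A) (C - B) = (0 : ℝ))
    (hH₂ : inner ℝ (H - B) (C - A) = (0 : ℝ))
    (hH₃ : inner ℝ (H - C) (B - A) = (0 : ℝ))
    (hA' : IsFoot H A' B C) (hB' : IsFoot H B' C A) (hC' : IsFoot H C' A B) :
    triArea A' B' C' / triArea A B C = |R ^ 2 - (dist O H) ^ 2| / (4 * R ^ 2) := by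
  -- components of hypotheses
  have hOA2 : (O 0 - A 0)^2 + (O 1 - A 1)^2 = R^2 := by rw [← dist_sq, hOA]
  have hOB2 : (O 0 - B 0)^2 + (O 1 - B 1)^2 = R^2 := by rw [← dist_sq, hOB]
  have hOC2 : (O 0 - C 0)^2 + (O 1 - C 1)^2 = R^2 := by rw [← dist_sq, hOC]
  have i1 : (H 0 - A 0)*(C 0 - B 0) + (H 1 - A 1)*(C 1 - B 1) = 0 := by
    have := hH₁; rw [inner_comp] at this; simpa using this
  have i2 : (H 0 - B 0)*(C 0 - A 0) + (H 1 - B 1)*(C 1 - A 1) = 0 := by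
    have := hH₂; rw [inner_comp] at this; simpa using this
  have i3 : (H 0 - C 0)*(B 0 - A 0) + (H 1 - C 1)*(B 1 - A 1) = 0 := by
    have := hH₃; rw [inner_comp] at this; simpa using this
  -- feet parametrizations
  obtain ⟨ta, hta⟩ := vadd_left_mem_affineSpan_pair.mp
    (show (A' -ᵥ B) +ᵥ B ∈ line[ℝ, B, C] by simpa using hA'.1)
  obtain ⟨tb, htb⟩ := vadd_left_mem_affineSpan_pair.mp
    (show (B' -ᵥ C) +ᵥ C ∈ line[ℝ, C, A] by simpa using hB'.1)
  obtain ⟨tc, htc⟩ := vadd_left_mem_affineSpan_pair.mp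
    (show (C' -ᵥ A) +ᵥ A ∈ line[ℝ, A, B] by simpa using hC'.1)
  have hta0 : A' 0 - B 0 = ta * (C 0 - B 0) := by
    have := congrArg (fun v => v 0) hta; simpa using this.symm
  have hta1 : A' 1 - B 1 = ta * (C 1 - B 1) := by
    have := congrArg (fun v => v 1) hta; simpa using this.symm
  have htb0 : B' 0 - C 0 = tb * (A 0 - C 0) := by
    have := congrArg (fun v => v 0) htb; simpa using this.symm
  have htb1 : B' 1 - C 1 = tb * (A 1 - C 1) := by
    have := congrArg (fun v => v 1) htb; simpa using this.symm
  have htc0 : C' 0 - A 0 = tc * (B 0 - A 0) := by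
    have := congrArg (fun v => v 0) htc; simpa using this.symm
  have htc1 : C' 1 - A 1 = tc * (B 1 - A 1) := by
    have := congrArg (fun v => v 1) htc; simpa using this.symm
  have ga : (H 0 - A' 0)*(C 0 - B 0) + (H 1 - A' 1)*(C 1 - B 1) = 0 := by
    have := hA'.2; rw [inner_comp] at this; simpa using this
  have gb : (H 0 - B' 0)*(A 0 - C 0) + (H 1 - B' 1)*(A 1 - C 1) = 0 := by
    have := hB'.2; rw [inner_comp] at this; simpa using this
  have gc : (H 0 - C' 0)*(B 0 - A 0) + (H 1 - C' 1)*(B 1 - A 1) = 0 := by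
    have := hC'.2; rw [inner_comp] at this; simpa using this
  -- nondegeneracy
  have hinj := hABC.injective
  have hAB : A ≠ B := fun h => by
    have : (0 : Fin 3) = 1 := hinj (by simp [h])
    simp at this
  have hAC : A ≠ C := fun h => by
    have : (0 : Fin 3) = 2 := hinj (by simp [h])
    simp at this
  have hBC : B ≠ C := fun h => by
    have : (1 : Fin 3) = 2 := hinj (by simp [h])
    simp at this
  have hnab : (B 0 - A 0)^2 + (B 1 - A 1)^2 ≠ 0 := fun h => hAB (comp_eq_of A B h)
  have hnca : (A 0 - C 0)^2 + (A 1 - C 1)^2 ≠ 0 := fun h => hAC.symm (comp_eq_of C A h)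
  have hnbc : (C 0 - B 0)^2 + (C 1 - B 1)^2 ≠ 0 := fun h => hBC (comp_eq_of B C h)
  have hS : (B 0 - A 0)*(C 1 - A 1) - (B 1 - A 1)*(C 0 - A 0) ≠ 0 := fun h =>
    affineIndependent_iff_not_collinear_set.mp hABC (collinear_of A B C hnab h)
  have hR0 : 0 ≤ R := hOA ▸ dist_nonneg
  have hRne : R ≠ 0 := by
    intro h
    apply hAB
    have h1 : O = A := by
      rw [← dist_eq_zero]; rw [hOA, h]
    have h2 : O = B := by
      rw [← dist_eq_zero]; rw [hOB, h]
    rw [← h1, h2]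
  have hRpos : 0 < R := lt_of_le_of_ne hR0 (Ne.symm hRne)
  have h4R : (0:ℝ) < 4 * R ^ 2 := by positivity
  -- apply the key lemma to shifted coordinates
  have key := orthic_key (B 0 - A 0) (B 1 - A 1) (C 0 - A 0) (C 1 - A 1)
    (O 0 - A 0) (O 1 - A 1) (H 0 - A 0) (H 1 - A 1)
    (A' 0 - A 0) (A' 1 - A 1) (B' 0 - A 0) (B' 1 - A 1) (C' 0 - A 0) (C' 1 - A 1)
    ta tb tc R
    hS
    (fun h => hnbc (by linear_combination h))
    (fun h => hnca (by linear_combination h))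
    hnab
    (by linear_combination hOA2) (by linear_combination hOB2) (by linear_combination hOC2)
    (by linear_combination i1) (by linear_combination i2) (by linear_combination i3)
    (by linear_combination hta0) (by linear_combination hta1) (by linear_combination ga)
    (by linear_combination htb0) (by linear_combination htb1) (by linear_combination gb)
    (by linear_combination htc0) (by linear_combination htc1) (by linear_combination gc)
  have hd : (dist O H)^2 = (O 0 - H 0)^2 + (O 1 - H 1)^2 := dist_sq O H
  have key' : 4*R^2 * ((B' 0 - A' 0)*(C' 1 - A' 1) - (B' 1 - A' 1)*(C' 0 - A' 0))
      = (R^2 - (dist O H)^2) * ((B 0 - A 0)*(C 1 - A 1) - (B 1 - A 1)*(C 0 - A 0)) := by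
    rw [hd]
    linear_combination key
  have habs : 4*R^2 * |(B' 0 - A' 0)*(C' 1 - A' 1) - (B' 1 - A' 1)*(C' 0 - A' 0)|
      = |R^2 - (dist O H)^2| * |(B 0 - A 0)*(C 1 - A 1) - (B 1 - A 1)*(C 0 - A 0)| := by
    calc 4*R^2 * |(B' 0 - A' 0)*(C' 1 - A' 1) - (B' 1 - A' 1)*(C' 0 - A' 0)|
        = |4*R^2 * ((B' 0 - A' 0)*(C' 1 - A' 1) - (B' 1 - A' 1)*(C' 0 - A' 0))| := by
          rw [abs_mul, abs_of_pos h4R]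
      _ = |(R^2 - (dist O H)^2) * ((B 0 - A 0)*(C 1 - A 1) - (B 1 - A 1)*(C 0 - A 0))| := by
          rw [key']
      _ = _ := abs_mul _ _
  simp only [triArea]
  rw [div_eq_div_iff (div_ne_zero (abs_ne_zero.mpr hS) two_ne_zero) (ne_of_gt h4R)]
  linear_combination habs / 2
end
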